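/- arXiv:2512.23083 — 2 statements merged into one kernel-verified Lean document; each statement's English description precedes it below -/
import Mathlib

section
/- Let f be an analytic function in the unit disc Δ such that 0 < ϱ_{(α,β,γ),M}[f] = ϱ_0 < +∞. Then for any 0 < μ < ϱ_0 there exists a set I ⊂ [0,1) of infinite logarithmic measure (∫_I dr/(1−r) = +∞) such that for all r ∈ I one has α(log log M(r,f)) > μ·β(log γ(1/(1−r))). -/
open Filter Topology MeasureTheory Asymptotics

/-- The maximum modulus `M(r,f) = max_{|z|=r} |f(z)|`. -/
noncomputable def maxMod (f : ℂ → ℂ) (r : ℝ) : ℝ :=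
  sSup ((fun z => ‖f z‖) '' Metric.sphere (0 : ℂ) r)

/-- `log⁺ x = max(0, log x)`. -/
noncomputable def logPlus (x : ℝ) : ℝ := max 0 (Real.log x)

/-- The Nevanlinna proximity function
`m(r,f) = (1/2π) ∫_0^{2π} log⁺ |f(r e^{iθ})| dθ`. -/
noncomputable def proxFun (f : ℂ → ℂ) (r : ℝ) : ℝ :=
  (2 * Real.pi)⁻¹ *
    ∫ θ in (0:ℝ)..(2 * Real.pi), logPlus ‖f ((r : ℂ) * Complex.exp (θ * Complex.I))‖

/-- The order of the pole of `f` at `z` (zero if `f` has no pole there). -/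
noncomputable def poleOrder (f : ℂ → ℂ) (z : ℂ) : ℕ :=
  @dite _ (MeromorphicAt f z) (Classical.dec _)
    (fun _ => (-((meromorphicOrderAt f z).untopD 0)).toNat) (fun _ => 0)

/-- `n(t,f)`: the number of poles of `f` in `|z| ≤ t`, counted with multiplicity. -/
noncomputable def poleCount (f : ℂ → ℂ) (t : ℝ) : ℝ :=
  ∑' z : (Metric.closedBall (0:ℂ) t), (poleOrder f z : ℝ)

/-- The integrated counting function
`N(r,f) = ∫_0^r (n(t,f) - n(0,f))/t dt + n(0,f) log r`. -/
noncomputable def countFun (f : ℂ → ℂ) (r : ℝ) : ℝ :=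
  (∫ t in (0:ℝ)..r, (poleCount f t - poleCount f 0) / t) + poleCount f 0 * Real.log r

/-- The Nevanlinna characteristic `T(r,f) = m(r,f) + N(r,f)`. -/
noncomputable def charT (f : ℂ → ℂ) (r : ℝ) : ℝ := proxFun f r + countFun f r

/-- The class `L` of growth functions. -/
def ClassL (a : ℝ → ℝ) : Prop :=
  Continuous a ∧ (∀ x, 0 ≤ a x) ∧ Monotone a ∧
    (∃ x₀, ∀ x ≤ x₀, a x = a x₀) ∧ Filter.Tendsto a Filter.atTop Filter.atTop

/-- `α ∈ L₁` : `α ∈ L` and `α(a+b) ≤ α(a)+α(b)+c` for all `a,b ≥ R₀`. -/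
def ClassL1 (a : ℝ → ℝ) : Prop :=
  ClassL a ∧ ∃ c > (0:ℝ), ∃ R₀ : ℝ, ∀ x ≥ R₀, ∀ y ≥ R₀, a (x + y) ≤ a x + a y + c

/-- `β ∈ L₂` : `β ∈ L` and `β(x+O(1)) = (1+o(1)) β(x)` as `x → +∞`. -/
def ClassL2 (b : ℝ → ℝ) : Prop :=
  ClassL b ∧ ∀ C : ℝ, Filter.Tendsto (fun x => b (x + C) / b x) Filter.atTop (nhds 1)

/-- `γ ∈ L₃` : `γ ∈ L` and `γ` is subadditive. -/
def ClassL3 (g : ℝ → ℝ) : Prop :=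
  ClassL g ∧ ∃ R₀ : ℝ, ∀ x ≥ R₀, ∀ y ≥ R₀, g (x + y) ≤ g x + g y

/-- The standing hypotheses on the growth scale functions `α, β, γ`:
`α ∈ L₁`, `β ∈ L₂`, `γ ∈ L₃`, `α(log^[p] x) = o(β(log γ(x)))` for `p ≥ 2`,
`α(log x) = o(α(x))`, and `α⁻¹(kx) = o(α⁻¹(x))` for each fixed `0 ≤ k < 1`. -/
def GrowthScale (a b g : ℝ → ℝ) : Prop :=
  ClassL1 a ∧ ClassL2 b ∧ ClassL3 g ∧
    (∀ p : ℕ, 2 ≤ p →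
      (fun x => a (Real.log^[p] x)) =o[Filter.atTop] fun x => b (Real.log (g x))) ∧
    ((fun x => a (Real.log x)) =o[Filter.atTop] a) ∧
    (∀ k : ℝ, 0 ≤ k → k < 1 →
      (fun x => Function.invFun a (k * x)) =o[Filter.atTop] fun x => Function.invFun a x)

/-- The comparison denominator `β(log γ(1/(1-r)))`. -/
noncomputable def betaDen (b g : ℝ → ℝ) (r : ℝ) : ℝ := b (Real.log (g (1 / (1 - r))))

/-- The `(α,β,γ)`-order of an analytic function in the unit disc,
defined via the maximum modulus. -/
noncomputable def orderM (a b g : ℝ → ℝ) (f : ℂ → ℂ) : EReal :=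
  Filter.limsup
    (fun r : ℝ => ((a (Real.log (Real.log (maxMod f r))) / betaDen b g r : ℝ) : EReal))
    (𝓝[<] (1:ℝ))

/-- The `(α(log),β,γ)`-order of an analytic function in the unit disc,
defined via the maximum modulus. -/
noncomputable def orderLogM (a b g : ℝ → ℝ) (f : ℂ → ℂ) : EReal :=
  Filter.limsup
    (fun r : ℝ =>
      ((a (Real.log (Real.log (Real.log (maxMod f r)))) / betaDen b g r : ℝ) : EReal))
    (𝓝[<] (1:ℝ))

/-- The `(α,β,γ)`-order of a meromorphic function in the unit disc,
defined via the Nevanlinna characteristic. -/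
noncomputable def orderT (a b g : ℝ → ℝ) (f : ℂ → ℂ) : EReal :=
  Filter.limsup
    (fun r : ℝ => ((a (Real.log (charT f r)) / betaDen b g r : ℝ) : EReal))
    (𝓝[<] (1:ℝ))

/-- The `(α(log),β,γ)`-order of a meromorphic function in the unit disc,
defined via the Nevanlinna characteristic. -/
noncomputable def orderLogT (a b g : ℝ → ℝ) (f : ℂ → ℂ) : EReal :=
  Filter.limsup
    (fun r : ℝ => ((a (Real.log (Real.log (charT f r))) / betaDen b g r : ℝ) : EReal))
    (𝓝[<] (1:ℝ))

/-- The `(α,β,γ)`-type (with order value `rho`) of an analytic function in the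
unit disc, defined via the maximum modulus. -/
noncomputable def typeM (a b g : ℝ → ℝ) (rho : ℝ) (f : ℂ → ℂ) : EReal :=
  Filter.limsup
    (fun r : ℝ =>
      ((Real.exp (a (Real.log (Real.log (maxMod f r)))) /
        (Real.exp (betaDen b g r)) ^ rho : ℝ) : EReal))
    (𝓝[<] (1:ℝ))

/-- A set `F ⊂ [0,1)` has finite logarithmic measure if `∫_F dr/(1-r) < ∞`. -/
def FiniteLogMeasure (F : Set ℝ) : Prop :=
  ∫⁻ r in F, ENNReal.ofReal (1 / (1 - r)) < ⊤

/-- A set `F ⊂ [0,1)` has infinite logarithmic measure if `∫_F dr/(1-r) = ∞`. -/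
def InfiniteLogMeasure (F : Set ℝ) : Prop :=
  ∫⁻ r in F, ENNReal.ofReal (1 / (1 - r)) = ⊤

/-- `f` is a solution, analytic on the unit disc, of the linear differential
equation `f^{(k)} + A_{k-1} f^{(k-1)} + ⋯ + A_1 f' + A_0 f = 0`. -/
def IsSolution (k : ℕ) (A : ℕ → ℂ → ℂ) (f : ℂ → ℂ) : Prop :=
  AnalyticOnNhd ℂ f (Metric.ball (0:ℂ) 1) ∧
    ∀ z ∈ Metric.ball (0:ℂ) 1,
      iteratedDeriv k f z + ∑ j ∈ Finset.range k, A j z * iteratedDeriv j f z = 0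


section Helpers

lemma maxMod_nonneg' (f : ℂ → ℂ) (r : ℝ) : 0 ≤ maxMod f r := by
  apply Real.sSup_nonneg
  rintro y ⟨w, _, rfl⟩; exact norm_nonneg _

lemma maxMod_bdd' (f : ℂ → ℂ) (hf : AnalyticOnNhd ℂ f (Metric.ball (0:ℂ) 1)) {r : ℝ}
    (hr : r < 1) : BddAbove ((fun z => ‖f z‖) '' Metric.sphere (0:ℂ) r) := by
  have hs : Metric.sphere (0:ℂ) r ⊆ Metric.ball (0:ℂ) 1 := by
    intro z hz
    rw [Metric.mem_sphere] at hz
    rw [Metric.mem_ball, hz]; exact hr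
  exact ((isCompact_sphere (0:ℂ) r).image_of_continuousOn
    ((hf.continuousOn.mono hs).norm)).bddAbove

lemma maxMod_mono' (f : ℂ → ℂ) (hf : AnalyticOnNhd ℂ f (Metric.ball (0:ℂ) 1)) {r₁ r₂ : ℝ}
    (h0 : 0 ≤ r₁) (h12 : r₁ ≤ r₂) (h2 : r₂ < 1) : maxMod f r₁ ≤ maxMod f r₂ := by
  rcases eq_or_lt_of_le (h0.trans h12) with h | h2pos
  · have : r₁ = r₂ := le_antisymm h12 (h ▸ h0)
    rw [this]
  · have hub : ∀ z ∈ Metric.sphere (0:ℂ) r₂, ‖f z‖ ≤ maxMod f r₂ := fun z hz =>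
      le_csSup (maxMod_bdd' f hf h2) ⟨z, hz, rfl⟩
    have key : ∀ z ∈ Metric.closedBall (0:ℂ) r₂, ‖f z‖ ≤ maxMod f r₂ := by
      intro z hz
      have hd : DiffContOnCl ℂ f (Metric.ball (0:ℂ) r₂) := by
        constructor
        · exact (hf.differentiableOn).mono (Metric.ball_subset_ball h2.le)
        · refine hf.continuousOn.mono ?_
          rw [closure_ball (0:ℂ) (ne_of_gt h2pos)]
          exact Metric.closedBall_subset_ball h2
      refine Complex.norm_le_of_forall_mem_frontier_norm_le Metric.isBounded_ball hd ?_ ?_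
      · intro w hw
        rw [frontier_ball (0:ℂ) (ne_of_gt h2pos)] at hw
        exact hub w hw
      · rwa [closure_ball (0:ℂ) (ne_of_gt h2pos)]
    apply Real.sSup_le _ (maxMod_nonneg' f r₂)
    rintro y ⟨w, hw, rfl⟩
    refine key w ?_
    rw [Metric.mem_sphere] at hw
    rw [Metric.mem_closedBall, hw]; exact h12

/-- The auxiliary predicate used to select good radii. -/
def GoodPt (a b g : ℝ → ℝ) (f : ℂ → ℂ) (Rg X₁ Y₀ c μ' : ℝ) (r : ℝ) : Prop :=
  0 < r ∧ r < 1 ∧ c < r ∧ max (max Rg 1) X₁ ≤ 1/(1-r) ∧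
    Y₀ ≤ Real.log (g (1/(1-r))) ∧
    μ' * betaDen b g r < a (Real.log (Real.log (maxMod f r)))

end Helpers

theorem stmt7
    (a b g : ℝ → ℝ) (hscale : GrowthScale a b g)
    (f : ℂ → ℂ) (hf : AnalyticOnNhd ℂ f (Metric.ball (0:ℂ) 1))
    (rho0 : ℝ) (hrho0 : orderM a b g f = (rho0 : EReal)) (hrho0pos : 0 < rho0)
    (μ : ℝ) (hμ0 : 0 < μ) (hμ : μ < rho0) :
    ∃ I : Set ℝ, I ⊆ Set.Ico (0:ℝ) 1 ∧ InfiniteLogMeasure I ∧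
      ∀ r ∈ I, μ * betaDen b g r < a (Real.log (Real.log (maxMod f r))) := by
  classical
  obtain ⟨⟨⟨_, _, ha_mono, _, _⟩, _⟩, hb2, hg3, _, _, _⟩ := hscale
  obtain ⟨⟨_, _, hb_mono, _, hb_top⟩, hb_ratio⟩ := hb2
  obtain ⟨⟨_, hg_nonneg, hg_mono, _, hg_top⟩, Rg, hg_sub⟩ := hg3
  set μ' := (μ + rho0)/2 with hμ'def
  have hμ'1 : μ < μ' := by rw [hμ'def]; linarith
  have hμ'2 : μ' < rho0 := by rw [hμ'def]; linarith
  have hμ'pos : 0 < μ' := lt_trans hμ0 hμ'1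
  -- basic tendsto facts
  have tφ : Filter.Tendsto (fun r : ℝ => 1/(1-r)) (𝓝[<](1:ℝ)) Filter.atTop := by
    have h1 : Filter.Tendsto (fun r : ℝ => 1 - r) (𝓝[<](1:ℝ)) (𝓝[>] (0:ℝ)) := by
      rw [tendsto_nhdsWithin_iff]
      constructor
      · have h2 : Filter.Tendsto (fun r : ℝ => 1 - r) (𝓝 (1:ℝ)) (𝓝 (0:ℝ)) := by
          have hcont : Continuous (fun r : ℝ => 1 - r) := by continuity
          simpa using hcont.tendsto 1
        exact h2.mono_left nhdsWithin_le_nhds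
      · filter_upwards [self_mem_nhdsWithin] with r hr
        simp only [Set.mem_Iio] at hr
        simp only [Set.mem_Ioi]; linarith
    simpa [one_div, Function.comp_def] using tendsto_inv_nhdsGT_zero.comp h1
  have tlg : Filter.Tendsto (fun r : ℝ => Real.log (g (1/(1-r)))) (𝓝[<](1:ℝ)) Filter.atTop :=
    (Real.tendsto_log_atTop.comp hg_top).comp tφ
  have tβ : Filter.Tendsto (fun r => betaDen b g r) (𝓝[<](1:ℝ)) Filter.atTop :=
    hb_top.comp tlg
  by_cases hbig : ∃ c, 0 ≤ c ∧ c < 1 ∧ 3 < maxMod f c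
  swap
  · -- degenerate case: maxMod is bounded, contradicting positive order
    exfalso
    push_neg at hbig
    obtain ⟨c₁, C, hc₁0, hc₁1, hC⟩ :
        ∃ c₁ C : ℝ, 0 ≤ c₁ ∧ c₁ < 1 ∧ ∀ r, c₁ ≤ r → r < 1 →
          a (Real.log (Real.log (maxMod f r))) ≤ C := by
      by_cases hpos : ∃ c₁, 0 ≤ c₁ ∧ c₁ < 1 ∧ 0 < maxMod f c₁
      · obtain ⟨c₁, hc₁0, hc₁1, hMpos⟩ := hpos
        have h3 : (1:ℝ) ≤ Real.log 3 := by
          rw [Real.le_log_iff_exp_le (by norm_num)]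
          exact le_trans Real.exp_one_lt_d9.le (by norm_num)
        have hB1 : 1 ≤ max |Real.log (maxMod f c₁)| (Real.log 3) :=
          le_trans h3 (le_max_right _ _)
        refine ⟨c₁, a (Real.log (max |Real.log (maxMod f c₁)| (Real.log 3))), hc₁0, hc₁1,
          fun r hr1 hr2 => ?_⟩
        have hM1 : maxMod f c₁ ≤ maxMod f r := maxMod_mono' f hf hc₁0 hr1 hr2
        have hM3 : maxMod f r ≤ 3 := hbig r (hc₁0.trans hr1) hr2
        have habs : |Real.log (maxMod f r)| ≤ max |Real.log (maxMod f c₁)| (Real.log 3) := by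
          rw [abs_le]
          constructor
          · have h4 := Real.log_le_log hMpos hM1
            have h5 : -|Real.log (maxMod f c₁)| ≤ Real.log (maxMod f r) :=
              le_trans (neg_abs_le _) h4
            linarith [le_max_left |Real.log (maxMod f c₁)| (Real.log 3)]
          · exact le_trans (Real.log_le_log (lt_of_lt_of_le hMpos hM1) hM3) (le_max_right _ _)
        apply ha_mono
        rcases eq_or_lt_of_le (abs_nonneg (Real.log (maxMod f r))) with h0 | h0
        · have hz : Real.log (maxMod f r) = 0 := abs_eq_zero.mp h0.symm
          rw [hz, Real.log_zero]
          exact Real.log_nonneg hB1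
        · calc Real.log (Real.log (maxMod f r))
              = Real.log |Real.log (maxMod f r)| := (Real.log_abs _).symm
            _ ≤ Real.log (max |Real.log (maxMod f c₁)| (Real.log 3)) :=
              Real.log_le_log h0 habs
      · push_neg at hpos
        refine ⟨0, a 0, le_refl 0, one_pos, fun r hr1 hr2 => ?_⟩
        have h0 : maxMod f r ≤ 0 := hpos r hr1 hr2
        have h1 : maxMod f r = 0 := le_antisymm h0 (maxMod_nonneg' f r)
        rw [h1, Real.log_zero, Real.log_zero]
    have hnum : (0:ℝ) < 2 * max C 1 :=
      mul_pos two_pos (lt_of_lt_of_le one_pos (le_max_right C 1))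
    have hev : ∀ᶠ r in 𝓝[<](1:ℝ),
        ((a (Real.log (Real.log (maxMod f r))) / betaDen b g r : ℝ) : EReal)
          ≤ ((rho0/2 : ℝ) : EReal) := by
      filter_upwards [self_mem_nhdsWithin,
        mem_nhdsWithin_of_mem_nhds (Ioi_mem_nhds hc₁1),
        tβ.eventually_ge_atTop (2 * max C 1 / rho0)] with r hr1 hrc hβ
      have hr1' : r < 1 := hr1
      have hβpos : (0:ℝ) < betaDen b g r :=
        lt_of_lt_of_le (div_pos hnum hrho0pos) hβ
      rw [EReal.coe_le_coe_iff]
      have hCb : a (Real.log (Real.log (maxMod f r))) ≤ C := hC r (le_of_lt hrc) hr1'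
      have h1 : a (Real.log (Real.log (maxMod f r))) / betaDen b g r
          ≤ max C 1 / betaDen b g r := by
        gcongr
        exact hCb.trans (le_max_left C 1)
      have h2 : max C 1 / betaDen b g r ≤ rho0 / 2 := by
        rw [div_le_iff₀ hβpos]
        have h3 := mul_le_mul_of_nonneg_left hβ (by linarith : (0:ℝ) ≤ rho0/2)
        have h4 : rho0/2 * (2 * max C 1 / rho0) = max C 1 := by
          field_simp
        linarith
      exact le_trans h1 h2
    have hle := Filter.limsup_le_of_le (h := hev)
    rw [orderM] at hrho0
    rw [hrho0] at hle
    have := EReal.coe_le_coe_iff.mp hle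
    linarith
  obtain ⟨c, hc0, hc1, hc3⟩ := hbig
  obtain ⟨X₁, hX₁⟩ := Filter.eventually_atTop.mp (hg_top.eventually_ge_atTop 1)
  have hK : 1 < μ'/μ := (one_lt_div hμ0).mpr hμ'1
  obtain ⟨Y₀, hY₀⟩ := Filter.eventually_atTop.mp
    ((Filter.Tendsto.eventually_lt_const hK (hb_ratio (Real.log 2))).and
      (hb_top.eventually_ge_atTop 1))
  have hfreq0 : ∃ᶠ r in 𝓝[<](1:ℝ),
      ((μ' : ℝ) : EReal)
        < ((a (Real.log (Real.log (maxMod f r))) / betaDen b g r : ℝ) : EReal) := by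
    by_contra hcon
    rw [Filter.not_frequently] at hcon
    have hev : ∀ᶠ r in 𝓝[<](1:ℝ),
        ((a (Real.log (Real.log (maxMod f r))) / betaDen b g r : ℝ) : EReal)
          ≤ ((μ' : ℝ) : EReal) := hcon.mono fun r hr => not_lt.mp hr
    have hle := Filter.limsup_le_of_le (h := hev)
    rw [orderM] at hrho0
    rw [hrho0] at hle
    exact absurd (EReal.coe_le_coe_iff.mp hle) (not_le.mpr hμ'2)
  have hfreqP : ∃ᶠ r in 𝓝[<](1:ℝ), GoodPt a b g f Rg X₁ Y₀ c μ' r := by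
    have hev : ∀ᶠ r in 𝓝[<](1:ℝ),
        0 < r ∧ r < 1 ∧ c < r ∧ max (max Rg 1) X₁ ≤ 1/(1-r) ∧
          Y₀ ≤ Real.log (g (1/(1-r))) ∧ 1 ≤ betaDen b g r := by
      filter_upwards [self_mem_nhdsWithin,
        mem_nhdsWithin_of_mem_nhds (Ioi_mem_nhds (zero_lt_one)),
        mem_nhdsWithin_of_mem_nhds (Ioi_mem_nhds hc1),
        tφ.eventually_ge_atTop (max (max Rg 1) X₁),
        tlg.eventually_ge_atTop Y₀,
        tβ.eventually_ge_atTop 1] with r h1 h2 h3 h4 h5 h6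
      exact ⟨h2, h1, h3, h4, h5, h6⟩
    refine (hfreq0.and_eventually hev).mono ?_
    rintro r ⟨hq, h1, h2, h3, h4, h5, h6⟩
    refine ⟨h1, h2, h3, h4, h5, ?_⟩
    rw [EReal.coe_lt_coe_iff] at hq
    have hβpos : (0:ℝ) < betaDen b g r := lt_of_lt_of_le one_pos h6
    exact (lt_div_iff₀ hβpos).mp hq
  have pick : ∀ t : ℝ, t < 1 → ∃ r, t < r ∧ GoodPt a b g f Rg X₁ Y₀ c μ' r := by
    intro t ht
    have hmem : Set.Ioi t ∈ 𝓝[<](1:ℝ) := mem_nhdsWithin_of_mem_nhds (Ioi_mem_nhds ht)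
    obtain ⟨r, hr1, hr2⟩ :=
      (hfreqP.and_eventually (Filter.eventually_of_mem hmem (fun x hx => hx))).exists
    exact ⟨r, hr2, hr1⟩
  choose! F hF1 hF2 using pick
  let s : ℕ → ℝ := fun n => Nat.rec (F 0) (fun _ x => F ((1 + x)/2)) n
  have hsP : ∀ n, GoodPt a b g f Rg X₁ Y₀ c μ' (s n) := by
    intro n
    induction n with
    | zero => exact hF2 0 one_pos
    | succ n ih =>
      have h1 : (1 + s n)/2 < 1 := by linarith [ih.2.1]
      exact hF2 _ h1
  have hsR : ∀ n, (1 + s n)/2 < s (n+1) := by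
    intro n
    have h1 : (1 + s n)/2 < 1 := by linarith [(hsP n).2.1]
    exact hF1 _ h1
  have hmono : StrictMono s := strictMono_nat_of_lt_succ (fun n => by
    have h1 := hsR n
    have h2 := (hsP n).2.1
    linarith)
  refine ⟨⋃ n, Set.Ico (s n) ((1 + s n)/2), ?_, ?_, ?_⟩
  · rintro r hr
    obtain ⟨n, hn1, hn2⟩ := Set.mem_iUnion.mp hr
    have h01 := (hsP n).1
    have h11 := (hsP n).2.1
    exact ⟨le_trans h01.le hn1, by linarith⟩
  · rw [InfiniteLogMeasure]
    have hdisj : Pairwise (Function.onFun Disjoint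
        (fun n => Set.Ico (s n) ((1 + s n)/2))) := by
      have key : ∀ m n, m < n →
          Disjoint (Set.Ico (s m) ((1+s m)/2)) (Set.Ico (s n) ((1+s n)/2)) := by
        intro m n hmn
        rw [Set.Ico_disjoint_Ico]
        have h1 : (1 + s m)/2 < s n :=
          lt_of_lt_of_le (hsR m) (hmono.monotone hmn)
        calc min ((1+s m)/2) ((1+s n)/2) ≤ (1+s m)/2 := min_le_left _ _
          _ ≤ max (s m) (s n) := le_trans h1.le (le_max_right _ _)
      intro m n hmn
      rcases lt_or_gt_of_ne hmn with h | h
      · exact key m n h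
      · exact (key n m h).symm
    rw [MeasureTheory.lintegral_iUnion (fun n => measurableSet_Ico) hdisj]
    refine top_unique ?_
    have hterm : ∀ n, ENNReal.ofReal (1/2) ≤
        ∫⁻ r in Set.Ico (s n) ((1 + s n)/2), ENNReal.ofReal (1/(1-r)) := by
      intro n
      have hs1 : s n < 1 := (hsP n).2.1
      have hpos : (0:ℝ) < 1 - s n := by linarith
      have hmeasur : Measurable (fun r : ℝ => ENNReal.ofReal (1/(1-r))) :=
        ENNReal.measurable_ofReal.comp
          (measurable_const.div (measurable_const.sub measurable_id))
      have hvol : ENNReal.ofReal (1/2)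
          = ENNReal.ofReal (1/(1 - s n)) * MeasureTheory.volume
              (Set.Ico (s n) ((1+s n)/2)) := by
        rw [Real.volume_Ico]
        have h2 : (1 + s n)/2 - s n = (1 - s n)/2 := by ring
        rw [h2, ← ENNReal.ofReal_mul (by positivity)]
        congr 1
        field_simp
      rw [hvol, ← MeasureTheory.setLIntegral_const]
      apply MeasureTheory.setLIntegral_mono hmeasur
      intro r hr
      obtain ⟨hr1, hr2⟩ := hr
      apply ENNReal.ofReal_le_ofReal
      apply one_div_le_one_div_of_le
      · linarith
      · linarith
    calc (⊤:ENNReal) = ∑' (_ : ℕ), ENNReal.ofReal (1/2) :=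
        (ENNReal.tsum_const_eq_top_of_ne_zero
          (ne_of_gt (ENNReal.ofReal_pos.mpr (by norm_num)))).symm
      _ ≤ ∑' (n : ℕ), (∫⁻ r in Set.Ico (s n) ((1+s n)/2), ENNReal.ofReal (1/(1-r))) :=
        ENNReal.tsum_le_tsum hterm
  · rintro r hr
    obtain ⟨n, hrn1, hrn2⟩ := Set.mem_iUnion.mp hr
    obtain ⟨hs0, hs1, hsc, hsX, hsY, hsβ⟩ := hsP n
    have hr1 : r < 1 := by linarith
    have hXpos : (0:ℝ) < 1 - s n := by linarith
    have hRgX : Rg ≤ 1/(1 - s n) :=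
      le_trans (le_trans (le_max_left Rg 1) (le_max_left _ X₁)) hsX
    have hX1 : (1:ℝ) ≤ 1/(1 - s n) :=
      le_trans (le_trans (le_max_right Rg 1) (le_max_left _ X₁)) hsX
    have hX₁X : X₁ ≤ 1/(1 - s n) := le_trans (le_max_right _ X₁) hsX
    -- monotonicity of the maximum modulus
    have hMc : 3 < maxMod f (s n) := lt_of_lt_of_le hc3 (maxMod_mono' f hf hc0 hsc.le hs1)
    have hMr : maxMod f (s n) ≤ maxMod f r := maxMod_mono' f hf hs0.le hrn1 hr1
    have hMpos : (0:ℝ) < maxMod f (s n) := by linarith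
    have hlogM : 1 < Real.log (maxMod f (s n)) := by
      rw [Real.lt_log_iff_exp_lt (by linarith)]
      calc Real.exp 1 < 2.7182818286 := Real.exp_one_lt_d9
        _ < 3 := by norm_num
        _ < maxMod f (s n) := hMc
    have hchain : a (Real.log (Real.log (maxMod f (s n))))
        ≤ a (Real.log (Real.log (maxMod f r))) := by
      apply ha_mono
      apply Real.log_le_log (by linarith)
      exact Real.log_le_log hMpos hMr
    -- comparison of the beta denominators
    have hφr : 1/(1-r) ≤ 2 * (1/(1 - s n)) := by
      have h1 : 1/(1-r) ≤ 1/((1 - s n)/2) :=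
        one_div_le_one_div_of_le (by linarith) (by linarith)
      have h2 : 1/((1 - s n)/2) = 2 * (1/(1 - s n)) := by
        field_simp
      linarith
    have hgmono : g (1/(1-r)) ≤ g (2 * (1/(1 - s n))) := hg_mono hφr
    have hsub : g (2 * (1/(1 - s n))) ≤ 2 * g (1/(1 - s n)) := by
      have h1 : g (1/(1 - s n) + 1/(1 - s n)) ≤ g (1/(1 - s n)) + g (1/(1 - s n)) :=
        hg_sub _ hRgX _ hRgX
      calc g (2 * (1/(1 - s n))) = g (1/(1 - s n) + 1/(1 - s n)) := by rw [two_mul]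
        _ ≤ g (1/(1 - s n)) + g (1/(1 - s n)) := h1
        _ = 2 * g (1/(1 - s n)) := by ring
    have hgX1 : (1:ℝ) ≤ g (1/(1 - s n)) := hX₁ _ hX₁X
    have hXr : 1/(1 - s n) ≤ 1/(1-r) :=
      one_div_le_one_div_of_le (by linarith) (by linarith)
    have hgr1 : (1:ℝ) ≤ g (1/(1-r)) := le_trans hgX1 (hg_mono hXr)
    have hloggr : Real.log (g (1/(1-r)))
        ≤ Real.log (g (1/(1 - s n))) + Real.log 2 := by
      have h1 : g (1/(1-r)) ≤ 2 * g (1/(1 - s n)) := le_trans hgmono hsub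
      have h2 := Real.log_le_log (by linarith : (0:ℝ) < g (1/(1-r))) h1
      rwa [Real.log_mul (by norm_num) (by linarith : g (1/(1 - s n)) ≠ 0),
        add_comm] at h2
    have hb1 : betaDen b g r ≤ b (Real.log (g (1/(1 - s n))) + Real.log 2) :=
      hb_mono hloggr
    obtain ⟨hratio, hbY1⟩ := hY₀ (Real.log (g (1/(1 - s n)))) hsY
    have hbYpos : (0:ℝ) < b (Real.log (g (1/(1 - s n)))) := lt_of_lt_of_le one_pos hbY1
    have hb2 : b (Real.log (g (1/(1 - s n))) + Real.log 2)
        < (μ'/μ) * b (Real.log (g (1/(1 - s n)))) :=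
      (div_lt_iff₀ hbYpos).mp hratio
    have hmu : μ * ((μ'/μ) * b (Real.log (g (1/(1 - s n)))))
        = μ' * b (Real.log (g (1/(1 - s n)))) := by
      field_simp
    calc μ * betaDen b g r ≤ μ * b (Real.log (g (1/(1 - s n))) + Real.log 2) :=
          mul_le_mul_of_nonneg_left hb1 hμ0.le
      _ < μ * ((μ'/μ) * b (Real.log (g (1/(1 - s n))))) :=
          mul_lt_mul_of_pos_left hb2 hμ0
      _ = μ' * b (Real.log (g (1/(1 - s n)))) := hmu
      _ = μ' * betaDen b g (s n) := rfl
      _ < a (Real.log (Real.log (maxMod f (s n)))) := hsβ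
      _ ≤ a (Real.log (Real.log (maxMod f r))) := hchain
end

section
/- Let g:[0,1)→ℝ and h:[0,1)→ℝ be monotone non-decreasing functions such that g(r) ≤ h(r) holds for all r outside an exceptional set F₃ ⊂ (0,1) of finite logarithmic measure. Then there exists d ∈ (0,1) such that, with s(r) = 1 − d(1−r), one has g(r) ≤ h(s(r)) for all r ∈ [0,1). -/
open Filter Topology MeasureTheory Asymptotics

theorem stmt13
    (g h : ℝ → ℝ)
    (hg : MonotoneOn g (Set.Ico (0:ℝ) 1)) (hh : MonotoneOn h (Set.Ico (0:ℝ) 1))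
    (F : Set ℝ) (hF : F ⊆ Set.Ioo (0:ℝ) 1) (hFm : FiniteLogMeasure F)
    (hgh : ∀ r ∈ Set.Ico (0:ℝ) 1, r ∉ F → g r ≤ h r) :
    ∃ d ∈ Set.Ioo (0:ℝ) 1, ∀ r ∈ Set.Ico (0:ℝ) 1, g r ≤ h (1 - d * (1 - r)) := by
  set I := ∫⁻ r in F, ENNReal.ofReal (1 / (1 - r)) with hI
  have hIlt : I < ⊤ := hFm
  have hIt : 0 ≤ I.toReal := ENNReal.toReal_nonneg
  set d : ℝ := Real.exp (-(I.toReal + 1)) with hd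
  have hd0 : 0 < d := Real.exp_pos _
  have hd1 : d < 1 := by
    rw [hd]
    exact Real.exp_lt_one_iff.mpr (by linarith)
  refine ⟨d, ⟨hd0, hd1⟩, ?_⟩
  intro r hr
  obtain ⟨hr0, hr1⟩ := hr
  set s := 1 - d * (1 - r) with hs
  have h1r : 0 < 1 - r := by linarith
  have hrs : r < s := by nlinarith
  have hs1 : s < 1 := by nlinarith
  have hs0 : 0 ≤ s := le_trans hr0 hrs.le
  have h1s : 1 - s = d * (1 - r) := by rw [hs]; ring
  have h1s0 : 0 < 1 - s := by rw [h1s]; positivity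
  -- continuity / integrability of t ↦ (1-t)⁻¹ on [r,s]
  have hcont : ContinuousOn (fun t : ℝ => (1 - t)⁻¹) (Set.uIcc r s) := by
    rw [Set.uIcc_of_le hrs.le]
    apply ContinuousOn.inv₀ (by fun_prop)
    intro t ht
    have := ht.2
    intro hc
    have : (1:ℝ) - s ≤ 0 := by linarith
    linarith
  have hii : IntervalIntegrable (fun t : ℝ => (1 - t)⁻¹) MeasureTheory.volume r s :=
    hcont.intervalIntegrable
  -- exact value of the interval integral
  have hderiv : ∀ t ∈ Set.uIcc r s,
      HasDerivAt (fun u : ℝ => -Real.log (1 - u)) ((1 - t)⁻¹) t := by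
    intro t ht
    rw [Set.uIcc_of_le hrs.le] at ht
    have h1t : 0 < 1 - t := by linarith [ht.2]
    have h1 : HasDerivAt (fun u : ℝ => 1 - u) (-1) t := by
      simpa using (hasDerivAt_id t).const_sub 1
    have h2 : HasDerivAt (fun u : ℝ => Real.log (1 - u)) ((1 - t)⁻¹ * (-1)) t :=
      (Real.hasDerivAt_log h1t.ne').comp t h1
    have := h2.neg
    simp only [mul_neg, mul_one, neg_neg] at this
    exact this
  have hint : ∫ t in r..s, (1 - t)⁻¹ = I.toReal + 1 := by
    rw [intervalIntegral.integral_eq_sub_of_hasDerivAt hderiv hii]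
    rw [h1s, Real.log_mul hd0.ne' h1r.ne', hd, Real.log_exp]
    ring
  -- the interval cannot be contained in F
  have hsub : ¬ (Set.Ioc r s ⊆ F) := by
    intro hsubF
    have hnn : 0 ≤ᵐ[MeasureTheory.volume.restrict (Set.Ioc r s)]
        fun t : ℝ => (1 - t)⁻¹ := by
      filter_upwards [MeasureTheory.ae_restrict_mem measurableSet_Ioc] with t ht
      have : 0 < 1 - t := by linarith [ht.2]
      positivity
    have hintg : MeasureTheory.IntegrableOn (fun t : ℝ => (1 - t)⁻¹)
        (Set.Ioc r s) MeasureTheory.volume :=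
      (intervalIntegrable_iff_integrableOn_Ioc_of_le hrs.le).mp hii
    have heq : ENNReal.ofReal (∫ t in Set.Ioc r s, (1 - t)⁻¹)
        = ∫⁻ t in Set.Ioc r s, ENNReal.ofReal ((1 - t)⁻¹) :=
      MeasureTheory.ofReal_integral_eq_lintegral_ofReal hintg hnn
    have hval : (∫ t in Set.Ioc r s, (1 - t)⁻¹) = I.toReal + 1 := by
      rw [← intervalIntegral.integral_of_le hrs.le, hint]
    have h1 : ENNReal.ofReal (I.toReal + 1) ≤ I := by
      rw [← hval, heq]
      calc ∫⁻ t in Set.Ioc r s, ENNReal.ofReal ((1 - t)⁻¹)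
          = ∫⁻ t in Set.Ioc r s, ENNReal.ofReal (1 / (1 - t)) := by
            simp [one_div]
        _ ≤ I := by rw [hI]; exact MeasureTheory.lintegral_mono_set hsubF
    have h2 : I < ENNReal.ofReal (I.toReal + 1) := by
      conv_lhs => rw [← ENNReal.ofReal_toReal hIlt.ne]
      exact (ENNReal.ofReal_lt_ofReal_iff_of_nonneg hIt).mpr (by linarith)
    exact absurd h1 (not_le.mpr h2)
  obtain ⟨r', hr'I, hr'F⟩ := Set.not_subset.mp hsub
  have hr'mem : r' ∈ Set.Ico (0:ℝ) 1 :=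
    ⟨le_trans hr0 hr'I.1.le, lt_of_le_of_lt hr'I.2 hs1⟩
  calc g r ≤ g r' := hg ⟨hr0, hr1⟩ hr'mem hr'I.1.le
    _ ≤ h r' := hgh r' hr'mem hr'F
    _ ≤ h s := hh hr'mem ⟨hs0, hs1⟩ hr'I.2
end
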